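/- If a tree T has Staller-start game domination number γ_g'(T) = 2, then T is a star K_{1,n} for some n ≥ 2, or T is the path P_4. -/

import Mathlib

open Finset

namespace DomGame

variable {V : Type*} [Fintype V] [DecidableEq V]

/-- Closed neighborhood of `v` in `G`, as a `Finset`. -/
noncomputable def cn (G : SimpleGraph V) (v : V) : Finset V :=
  haveI : DecidablePred (fun u : V => u = v ∨ G.Adj v u) := fun _ => Classical.propDecidable _
  Finset.univ.filter (fun u : V => u = v ∨ G.Adj v u)

/-- Value (number of remaining moves, optimal play) of the domination game on `G`,
with fuel, where `D` is the set of already dominated vertices and `who = true`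
means Dominator is to move (minimizing); `who = false` means Staller (maximizing). -/
noncomputable def auxVal (G : SimpleGraph V) : ℕ → Bool → Finset V → ℕ
  | 0, _, _ => 0
  | n + 1, who, D =>
    if D = Finset.univ then 0
    else
      haveI : DecidablePred (fun v : V => ¬ cn G v ⊆ D) := fun _ => Classical.propDecidable _
      let moves : Finset V := Finset.univ.filter (fun v : V => ¬ cn G v ⊆ D)
      if who then
        WithTop.untopD 0 ((moves.image (fun v => 1 + auxVal G n false (D ∪ cn G v))).min)
      else
        moves.sup (fun v => 1 + auxVal G n true (D ∪ cn G v))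

/-- Remaining moves of the domination game on the partially dominated graph `(G, D)`,
Dominator to move, both players optimal. -/
noncomputable def gVal (G : SimpleGraph V) (D : Finset V) : ℕ :=
  auxVal G (Fintype.card V) true D

/-- Remaining moves, Staller to move. -/
noncomputable def gVal' (G : SimpleGraph V) (D : Finset V) : ℕ :=
  auxVal G (Fintype.card V) false D

/-- The game domination number (Dominator starts). -/
noncomputable def gammaG (G : SimpleGraph V) : ℕ := gVal G ∅

/-- The Staller-start game domination number. -/
noncomputable def gammaG' (G : SimpleGraph V) : ℕ := gVal' G ∅

/-- `S` is a dominating set of `G`. -/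
def IsDomSet (G : SimpleGraph V) (S : Finset V) : Prop :=
  ∀ v : V, ∃ u ∈ S, u = v ∨ G.Adj u v

/-- The domination number of `G`. -/
noncomputable def gamma (G : SimpleGraph V) : ℕ :=
  sInf {n | ∃ S : Finset V, IsDomSet G S ∧ S.card = n}

end DomGame

namespace Stmt10Aux

open SimpleGraph DomGame

set_option linter.unusedSectionVars false

variable {V : Type*} [Fintype V] [DecidableEq V] {T : SimpleGraph V}

lemma mem_cn {G : SimpleGraph V} {u v : V} : u ∈ cn G v ↔ u = v ∨ G.Adj v u := by
  classical
  simp [cn]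

lemma self_mem_cn {G : SimpleGraph V} {v : V} : v ∈ cn G v := mem_cn.2 (Or.inl rfl)

lemma untop'_min_le {s : Finset ℕ} {m : ℕ} (h : ∀ x ∈ s, x ≤ m) :
    WithTop.untopD 0 s.min ≤ m := by
  rcases s.eq_empty_or_nonempty with rfl | h'
  · simp
  · rw [← Finset.coe_min' h', WithTop.untopD_coe]
    exact h _ (Finset.min'_mem s h')

lemma exists_of_untop'_min_le {s : Finset ℕ} {m : ℕ} (hne : s.Nonempty)
    (h : WithTop.untopD 0 s.min ≤ m) : ∃ x ∈ s, x ≤ m := by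
  rw [← Finset.coe_min' hne, WithTop.untopD_coe] at h
  exact ⟨_, Finset.min'_mem s hne, h⟩

lemma auxVal_le (G : SimpleGraph V) : ∀ (n : ℕ) (who : Bool) (D : Finset V),
    auxVal G n who D ≤ n := by
  intro n
  induction n with
  | zero => intro who D; rw [auxVal]
  | succ n ih =>
    intro who D
    rw [auxVal]
    dsimp only
    split
    · omega
    · split
      · apply untop'_min_le
        intro x hx
        rw [Finset.mem_image] at hx
        obtain ⟨v, hv, hveq⟩ := hx
        have := ih false (D ∪ cn G v)
        omega
      · apply Finset.sup_le
        intro v hv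
        have := ih true (D ∪ cn G v)
        omega

lemma auxVal_false_eq_zero {G : SimpleGraph V} {n : ℕ} {D : Finset V}
    (h : auxVal G (n + 1) false D = 0) : D = Finset.univ := by
  by_contra hne
  rw [auxVal, if_neg hne] at h
  simp only [Bool.false_eq_true, if_false] at h
  obtain ⟨x, hx⟩ : ∃ x, x ∉ D := by
    by_contra hc
    push_neg at hc
    exact hne (Finset.eq_univ_iff_forall.2 hc)
  have hxm : x ∈ @Finset.filter V (fun v : V => ¬ cn G v ⊆ D)
      (fun _ => Classical.propDecidable _) Finset.univ :=
    (@Finset.mem_filter V (fun v : V => ¬ cn G v ⊆ D)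
      (fun _ => Classical.propDecidable _) Finset.univ x).2
      ⟨Finset.mem_univ x, fun hsub => hx (hsub self_mem_cn)⟩
  have := Finset.le_sup (f := fun v => 1 + auxVal G n true (D ∪ cn G v)) hxm
  omega

lemma mem_moves {G : SimpleGraph V} {D : Finset V} {x : V} (hx : ¬ cn G x ⊆ D) :
    x ∈ @Finset.filter V (fun v : V => ¬ cn G v ⊆ D)
      (fun _ => Classical.propDecidable _) Finset.univ :=
  (@Finset.mem_filter V (fun v : V => ¬ cn G v ⊆ D)
    (fun _ => Classical.propDecidable _) Finset.univ x).2 ⟨Finset.mem_univ x, hx⟩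

lemma cross_aux {v : V} : ∀ {x u : V}, T.Walk x u → x ∈ cn T v → u ∉ cn T v →
    ∃ p q, T.Adj p q ∧ p ∈ cn T v ∧ q ∉ cn T v := by
  intro x u w
  induction w with
  | nil => intro hx hu; exact absurd hx hu
  | @cons a b c hadj w ih =>
    intro hx hu
    by_cases hb : b ∈ cn T v
    · exact ih hb hu
    · exact ⟨a, b, hadj, hx, hb⟩

lemma cross (hT : T.Connected) {v w₀ : V} (hw : w₀ ∉ cn T v) :
    ∃ p q, T.Adj p q ∧ p ∈ cn T v ∧ q ∉ cn T v := by
  obtain ⟨wlk⟩ := hT.preconnected v w₀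
  exact cross_aux wlk self_mem_cn hw

lemma extract (hT : T.IsTree) (h2 : gammaG' T = 2) :
    (∃ v w : V, w ∉ cn T v) ∧ (∀ v : V, ∃ u : V, ∀ x : V, x ∈ cn T v ∨ x ∈ cn T u) := by
  classical
  have hle := auxVal_le T (Fintype.card V) false ∅
  rw [gammaG', gVal'] at h2
  have hcard2 : 2 ≤ Fintype.card V := by omega
  haveI hnev : Nonempty V := Fintype.card_pos_iff.1 (by omega)
  have hempty : (∅ : Finset V) ≠ Finset.univ := by
    obtain ⟨x⟩ := hnev
    intro h
    exact Finset.notMem_empty x (h ▸ Finset.mem_univ x)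
  obtain ⟨M, hM⟩ : ∃ M, Fintype.card V = M + 2 := ⟨Fintype.card V - 2, by omega⟩
  rw [hM, auxVal, if_neg hempty] at h2
  simp only [Bool.false_eq_true, if_false] at h2
  simp only [Finset.empty_union] at h2
  -- per-vertex upper bound
  have hball : ∀ v : V, 1 + auxVal T (M + 1) true (cn T v) ≤ 2 := by
    intro v
    have hmem := mem_moves (G := T) (D := (∅ : Finset V))
      (fun hsub => Finset.notMem_empty v (hsub self_mem_cn))
    have := Finset.le_sup (f := fun v => 1 + auxVal T (M + 1) true (cn T v)) hmem
    omega
  -- (A): some vertex with non-full closed neighborhood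
  have hA : ∃ v w : V, w ∉ cn T v := by
    obtain ⟨x⟩ := hnev
    have hsne : (@Finset.filter V (fun v : V => ¬ cn T v ⊆ (∅ : Finset V))
        (fun _ => Classical.propDecidable _) Finset.univ).Nonempty :=
      ⟨x, mem_moves (fun hsub => Finset.notMem_empty x (hsub self_mem_cn))⟩
    obtain ⟨v₀, hv₀mem, hv₀⟩ := Finset.exists_mem_eq_sup _ hsne
      (fun v => 1 + auxVal T (M + 1) true (cn T v))
    rw [hv₀] at h2
    have h1 : auxVal T (M + 1) true (cn T v₀) = 1 := by omega
    have hv₀ne : cn T v₀ ≠ Finset.univ := by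
      intro h
      rw [auxVal, if_pos h] at h1
      exact absurd h1 (by omega)
    obtain ⟨w, hw⟩ : ∃ w, w ∉ cn T v₀ := by
      by_contra hc
      push_neg at hc
      exact hv₀ne (Finset.eq_univ_iff_forall.2 hc)
    exact ⟨v₀, w, hw⟩
  refine ⟨hA, ?_⟩
  -- card ≥ 3
  have hcard3 : 3 ≤ Fintype.card V := by
    by_contra hc
    push_neg at hc
    obtain ⟨v, w, hw⟩ := hA
    have hvw : v ≠ w := fun h => hw (h ▸ self_mem_cn)
    have htwo : ∀ x : V, x = v ∨ x = w := by
      intro x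
      by_contra hx
      push_neg at hx
      have hsub : ({x, v, w} : Finset V).card ≤ Fintype.card V := Finset.card_le_univ _
      rw [Finset.card_insert_of_notMem (by simp [hx.1, hx.2]),
        Finset.card_insert_of_notMem (by simp [hvw]), Finset.card_singleton] at hsub
      omega
    obtain ⟨p, q, hpq, hp, hq⟩ := cross hT.isConnected hw
    rcases htwo p with rfl | rfl
    · rcases htwo q with rfl | rfl
      · exact hq self_mem_cn
      · exact hq (mem_cn.2 (Or.inr hpq))
    · exact hw hp
  obtain ⟨K, hK⟩ : ∃ K, M = K + 1 := ⟨M - 1, by omega⟩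
  -- (B)
  intro v
  by_cases hcv : cn T v = Finset.univ
  · exact ⟨v, fun x => Or.inl (by rw [hcv]; exact Finset.mem_univ x)⟩
  · have hb := hball v
    have hb1 : auxVal T (M + 1) true (cn T v) ≤ 1 := by omega
    rw [auxVal, if_neg hcv] at hb1
    simp only [if_true] at hb1
    obtain ⟨y, hy⟩ : ∃ y, y ∉ cn T v := by
      by_contra hc
      push_neg at hc
      exact hcv (Finset.eq_univ_iff_forall.2 hc)
    have hyne : ¬ cn T y ⊆ cn T v := fun hsub => hy (hsub self_mem_cn)
    have himg : ((@Finset.filter V (fun u : V => ¬ cn T u ⊆ cn T v)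
        (fun _ => Classical.propDecidable _) Finset.univ).image
        (fun u => 1 + auxVal T (K + 1) false (cn T v ∪ cn T u))).Nonempty :=
      ⟨_, Finset.mem_image_of_mem _ (mem_moves hyne)⟩
    rw [hK] at hb1
    obtain ⟨m, hmmem, hmle⟩ := exists_of_untop'_min_le himg hb1
    rw [Finset.mem_image] at hmmem
    obtain ⟨u, humem, hueq⟩ := hmmem
    have h0 : auxVal T (K + 1) false (cn T v ∪ cn T u) = 0 := by omega
    have huniv := auxVal_false_eq_zero h0
    exact ⟨u, fun x => Finset.mem_union.1 (by rw [huniv]; exact Finset.mem_univ x)⟩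

-- acyclicity helpers

lemma L12 (hT : T.IsAcyclic) {a b c : V} (h1 : T.Adj a b) (h2 : T.Adj b c) (h3 : T.Adj a c) :
    False := by
  have hp1 : (Walk.cons h3 .nil).IsPath := by
    simp [Walk.isPath_def, h3.ne]
  have hp2 : (Walk.cons h1 (Walk.cons h2 .nil)).IsPath := by
    simp [Walk.isPath_def, h1.ne, h2.ne, h3.ne]
  have heq := hT.path_unique ⟨_, hp1⟩ ⟨_, hp2⟩
  have := congrArg (fun p : T.Path a c => (p : T.Walk a c).support) heq
  simp at this

lemma L22 (hT : T.IsAcyclic) {a b c d : V} (h1 : T.Adj a b) (h2 : T.Adj b d)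
    (h3 : T.Adj a c) (h4 : T.Adj c d) (hbc : b ≠ c) (had : a ≠ d) : False := by
  have hp1 : (Walk.cons h1 (Walk.cons h2 .nil)).IsPath := by
    simp [Walk.isPath_def, h1.ne, h2.ne, had]
  have hp2 : (Walk.cons h3 (Walk.cons h4 .nil)).IsPath := by
    simp [Walk.isPath_def, h3.ne, h4.ne, had]
  have heq := hT.path_unique ⟨_, hp1⟩ ⟨_, hp2⟩
  have := congrArg (fun p : T.Path a d => (p : T.Walk a d).support) heq
  simp at this
  exact hbc this

lemma L23 (hT : T.IsAcyclic) {a b c1 c2 d : V} (h1 : T.Adj a b) (h2 : T.Adj b d)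
    (h3 : T.Adj a c1) (h4 : T.Adj c1 c2) (h5 : T.Adj c2 d)
    (had : a ≠ d) (hac2 : a ≠ c2) (hc1d : c1 ≠ d) : False := by
  have hp1 : (Walk.cons h1 (Walk.cons h2 .nil)).IsPath := by
    simp [Walk.isPath_def, h1.ne, h2.ne, had]
  have hp2 : (Walk.cons h3 (Walk.cons h4 (Walk.cons h5 .nil))).IsPath := by
    simp [Walk.isPath_def, h3.ne, h4.ne, h5.ne, had, hac2, hc1d]
  have heq := hT.path_unique ⟨_, hp1⟩ ⟨_, hp2⟩
  have := congrArg (fun p : T.Path a d => (p : T.Walk a d).support) heq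
  simp at this

lemma L33 (hT : T.IsAcyclic) {a b1 b2 c1 c2 d : V} (h1 : T.Adj a b1) (h2 : T.Adj b1 b2)
    (h3 : T.Adj b2 d) (h4 : T.Adj a c1) (h5 : T.Adj c1 c2) (h6 : T.Adj c2 d)
    (hb1c1 : b1 ≠ c1) (hab2 : a ≠ b2) (hb1d : b1 ≠ d) (had : a ≠ d)
    (hac2 : a ≠ c2) (hc1d : c1 ≠ d) : False := by
  have hp1 : (Walk.cons h1 (Walk.cons h2 (Walk.cons h3 .nil))).IsPath := by
    simp [Walk.isPath_def, h1.ne, h2.ne, h3.ne, hab2, hb1d, had]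
  have hp2 : (Walk.cons h4 (Walk.cons h5 (Walk.cons h6 .nil))).IsPath := by
    simp [Walk.isPath_def, h4.ne, h5.ne, h6.ne, hac2, hc1d, had]
  have heq := hT.path_unique ⟨_, hp1⟩ ⟨_, hp2⟩
  have := congrArg (fun p : T.Path a d => (p : T.Walk a d).support) heq
  simp at this
  exact hb1c1 this.1

-- cn helpers

lemma adj_of_mem_cn {x v : V} (h : x ∈ cn T v) (hne : x ≠ v) : T.Adj v x :=
  (mem_cn.1 h).resolve_left hne

lemma mem_cn_of_adj {x v : V} (h : T.Adj v x) : x ∈ cn T v := mem_cn.2 (Or.inr h)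

lemma not_mem_cn {x v : V} (hne : x ≠ v) (hadj : ¬T.Adj v x) : x ∉ cn T v := by
  rw [mem_cn]
  tauto

lemma cn_comm {x y : V} : x ∈ cn T y ↔ y ∈ cn T x := by
  rw [mem_cn, mem_cn, T.adj_comm]
  constructor <;> (rintro (rfl | h); exacts [Or.inl rfl, Or.inr h])

def P4Data (T : SimpleGraph V) (a b c d : V) : Prop :=
  (T.Adj a b ∧ T.Adj b c ∧ T.Adj c d) ∧ (¬T.Adj a c ∧ ¬T.Adj a d ∧ ¬T.Adj b d) ∧
    (a ≠ c ∧ a ≠ d ∧ b ≠ d) ∧ ∀ x : V, x = a ∨ x = b ∨ x = c ∨ x = d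

lemma leafAdj (hac : T.IsAcyclic) {v u a : V} (hvu : T.Adj v u) (hva : T.Adj v a)
    (hnua : ¬T.Adj u a) (hau : a ≠ u) (hU : ∀ x : V, x ∈ cn T v ∨ x ∈ cn T u) :
    ∀ x ∈ cn T a, x = a ∨ x = v := by
  intro x hx
  by_contra hc
  push_neg at hc
  obtain ⟨hxa, hxv⟩ := hc
  have hax : T.Adj a x := adj_of_mem_cn hx hxa
  have hxu : x ≠ u := by
    rintro rfl
    exact hnua hax.symm
  rcases hU x with h | h
  · exact L12 hac hva hax (adj_of_mem_cn h hxv)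
  · exact L22 hac hva hax hvu (adj_of_mem_cn h hxu) hau (Ne.symm hxv)

lemma caseAdj (hT : T.IsTree) (hB : ∀ a : V, ∃ b : V, ∀ x : V, x ∈ cn T a ∨ x ∈ cn T b)
    (hno : ∀ c : V, cn T c ≠ Finset.univ) {v u : V} (hvu : T.Adj v u)
    (hU : ∀ x : V, x ∈ cn T v ∨ x ∈ cn T u) :
    ∃ a b c d : V, P4Data T a b c d := by
  have hac := hT.IsAcyclic
  have hU' : ∀ x : V, x ∈ cn T u ∨ x ∈ cn T v := fun x => (hU x).symm
  -- a : private neighbor of v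
  obtain ⟨a, ha⟩ : ∃ a, a ∉ cn T u := by
    by_contra hc
    push_neg at hc
    exact hno u (Finset.eq_univ_iff_forall.2 hc)
  have hacv : a ∈ cn T v := (hU a).resolve_right ha
  have hau : a ≠ u := fun h => ha (h ▸ self_mem_cn)
  have hnua : ¬T.Adj u a := fun h => ha (mem_cn_of_adj h)
  have hav : a ≠ v := fun h => ha (h ▸ mem_cn_of_adj hvu.symm)
  have hva : T.Adj v a := adj_of_mem_cn hacv hav
  -- b : private neighbor of u
  obtain ⟨b, hb⟩ : ∃ b, b ∉ cn T v := by
    by_contra hc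
    push_neg at hc
    exact hno v (Finset.eq_univ_iff_forall.2 hc)
  have hbcu : b ∈ cn T u := (hU b).resolve_left hb
  have hbv : b ≠ v := fun h => hb (h ▸ self_mem_cn)
  have hnvb : ¬T.Adj v b := fun h => hb (mem_cn_of_adj h)
  have hbu : b ≠ u := fun h => hb (h ▸ mem_cn_of_adj hvu)
  have hub : T.Adj u b := adj_of_mem_cn hbcu hbu
  have hab : a ≠ b := fun h => hb (h ▸ hacv)
  have hnab : ¬T.Adj a b := fun h => L22 hac hva h hvu hub hau hbv.symm
  -- leaf structure
  have hcna : ∀ x ∈ cn T a, x = a ∨ x = v := leafAdj hac hvu hva hnua hau hU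
  have hcnb : ∀ x ∈ cn T b, x = b ∨ x = u := leafAdj hac hvu.symm hub hnvb hbv hU'
  -- partner of a
  obtain ⟨p, hUa⟩ := hB a
  have hbp : b ∈ cn T p := by
    refine (hUa b).resolve_left fun h => ?_
    rcases hcna b h with rfl | rfl
    · exact hab rfl
    · exact hbv rfl
  have hp : p = b ∨ p = u := hcnb p (cn_comm.1 hbp)
  -- partner of b
  obtain ⟨q, hUb⟩ := hB b
  have haq : a ∈ cn T q := by
    refine (hUb a).resolve_left fun h => ?_
    rcases hcnb a h with rfl | rfl
    · exact hab rfl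
    · exact hau rfl
  have hq : q = a ∨ q = v := hcna q (cn_comm.1 haq)
  -- classification
  have huniv : ∀ x : V, x = a ∨ x = v ∨ x = u ∨ x = b := by
    intro x
    rcases hp with rfl | rfl
    · rcases hUa x with h | h
      · rcases hcna x h with rfl | rfl
        · exact Or.inl rfl
        · exact Or.inr (Or.inl rfl)
      · rcases hcnb x h with rfl | rfl
        · exact Or.inr (Or.inr (Or.inr rfl))
        · exact Or.inr (Or.inr (Or.inl rfl))
    · rcases hq with rfl | rfl
      · rcases hUb x with h | h
        · rcases hcnb x h with rfl | rfl
          · exact Or.inr (Or.inr (Or.inr rfl))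
          · exact Or.inr (Or.inr (Or.inl rfl))
        · rcases hcna x h with rfl | rfl
          · exact Or.inl rfl
          · exact Or.inr (Or.inl rfl)
      · rcases hUa x with h | h
        · rcases hcna x h with rfl | rfl
          · exact Or.inl rfl
          · exact Or.inr (Or.inl rfl)
        · rcases hUb x with h2 | h2
          · rcases hcnb x h2 with rfl | rfl
            · exact Or.inr (Or.inr (Or.inr rfl))
            · exact Or.inr (Or.inr (Or.inl rfl))
          · -- x ∈ cn T u ∧ x ∈ cn T v
            rcases mem_cn.1 h with rfl | hux
            · exact Or.inr (Or.inr (Or.inl rfl))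
            · rcases mem_cn.1 h2 with rfl | hvx
              · exact Or.inr (Or.inl rfl)
              · exact absurd (L12 hac hvu hux hvx) (fun h => h)
  refine ⟨a, v, u, b, ⟨hva.symm, hvu, hub⟩, ⟨fun h => hnua h.symm, hnab, hnvb⟩,
    ⟨hau, hab, hbv.symm⟩, huniv⟩

lemma leaf2 (hac : T.IsAcyclic) {v u c w : V} (hvu : ¬T.Adj v u) (hne : v ≠ u)
    (hU : ∀ x : V, x ∈ cn T v ∨ x ∈ cn T u) (hvc : T.Adj v c) (huc : T.Adj u c)
    (hvw : T.Adj v w) (hcw : ¬T.Adj c w) (huw : ¬T.Adj u w) :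
    ∀ x ∈ cn T w, x = w ∨ x = v := by
  intro x hx
  by_contra hcon
  push_neg at hcon
  obtain ⟨hxw, hxv⟩ := hcon
  have hwx : T.Adj w x := adj_of_mem_cn hx hxw
  have hxu : x ≠ u := fun h => huw (by rw [h] at hwx; exact hwx.symm)
  have hxc : x ≠ c := fun h => hcw (by rw [h] at hwx; exact hwx.symm)
  rcases hU x with h | h
  · exact L12 hac hvw hwx (adj_of_mem_cn h hxv)
  · exact L23 hac hvw hwx hvc huc.symm (adj_of_mem_cn h hxu)
      (Ne.symm hxv) hne (Ne.symm hxc)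

lemma dist2Side (hT : T.IsTree) (hB : ∀ a : V, ∃ b : V, ∀ x : V, x ∈ cn T a ∨ x ∈ cn T b)
    {v u c w : V} (hvu : ¬T.Adj v u) (hne : v ≠ u)
    (hU : ∀ x : V, x ∈ cn T v ∨ x ∈ cn T u) (hvc : T.Adj v c) (huc : T.Adj u c)
    (hvw : T.Adj v w) (hcw : ¬T.Adj c w) (huw : ¬T.Adj u w) :
    ∃ a b c d : V, P4Data T a b c d := by
  have hac := hT.IsAcyclic
  have hU' : ∀ x : V, x ∈ cn T u ∨ x ∈ cn T v := fun x => (hU x).symm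
  have hwu : w ≠ u := fun h => hvu (h ▸ hvw)
  have hwv : w ≠ v := hvw.ne'
  have hwc : w ≠ c := fun h => huw (by rw [h]; exact huc)
  have hcommon : ∀ x, T.Adj v x → T.Adj u x → x = c := by
    intro x hvx hux
    by_contra hxc
    exact L22 hac hvx hux.symm hvc huc.symm hxc hne
  have hcnc : ∀ x ∈ cn T c, x = c ∨ x = v ∨ x = u := by
    intro x hx
    by_contra hcon
    push_neg at hcon
    obtain ⟨hxc, hxv, hxu⟩ := hcon
    have hcx : T.Adj c x := adj_of_mem_cn hx hxc
    rcases hU x with h | h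
    · exact L12 hac hvc hcx (adj_of_mem_cn h hxv)
    · exact L12 hac huc hcx (adj_of_mem_cn h hxu)
  have hcnw : ∀ x ∈ cn T w, x = w ∨ x = v := leaf2 hac hvu hne hU hvc huc hvw hcw huw
  -- B empty: u's only neighbor is c
  have hBemp : ∀ x, T.Adj u x → x = c := by
    intro b hub
    by_contra hbc
    have hbv : b ≠ v := fun h => hvu (by rw [h] at hub; exact hub.symm)
    have hnvb : ¬T.Adj v b := fun h => hbc (hcommon b h hub)
    have hbw : b ≠ w := fun h => huw (h ▸ hub)
    have hncb : ¬T.Adj c b := by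
      intro h
      rcases hcnc b (mem_cn_of_adj h) with rfl | rfl | rfl
      · exact hbc rfl
      · exact hbv rfl
      · exact hub.ne rfl
    have hcnb : ∀ x ∈ cn T b, x = b ∨ x = u :=
      leaf2 hac (fun h => hvu h.symm) (Ne.symm hne) hU' huc hvc hub hncb hnvb
    obtain ⟨t, hUc⟩ := hB c
    have hwt : w ∈ cn T t :=
      (hUc w).resolve_left (not_mem_cn hwc hcw)
    have hbt : b ∈ cn T t :=
      (hUc b).resolve_left (not_mem_cn hbc hncb)
    rcases hcnw t (cn_comm.1 hwt) with h1 | h1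
    · rcases hcnb t (cn_comm.1 hbt) with h2 | h2
      · exact hbw (h2.symm.trans h1)
      · exact hwu (h1.symm.trans h2)
    · rcases hcnb t (cn_comm.1 hbt) with h2 | h2
      · exact hbv (h2.symm.trans h1)
      · exact hne (h1.symm.trans h2)
  -- A ⊆ {c, w}
  have hAsub : ∀ x, T.Adj v x → x = c ∨ x = w := by
    intro a hva
    by_contra hcon
    push_neg at hcon
    obtain ⟨hacne, haw⟩ := hcon
    have hnua : ¬T.Adj u a := fun h => hacne (hcommon a hva h)
    have hnca : ¬T.Adj c a := by
      intro h
      rcases hcnc a (mem_cn_of_adj h) with rfl | rfl | rfl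
      · exact hacne rfl
      · exact hva.ne rfl
      · exact hvu hva
    have hcna : ∀ x ∈ cn T a, x = a ∨ x = v := leaf2 hac hvu hne hU hvc huc hva hnca hnua
    obtain ⟨r, hUw⟩ := hB w
    have hcr : c ∈ cn T r :=
      (hUw c).resolve_left (not_mem_cn (Ne.symm hwc) (fun h => hcw h.symm))
    have hur : u ∈ cn T r :=
      (hUw u).resolve_left (not_mem_cn (Ne.symm hwu) (fun h => huw h.symm))
    have har : a ∈ cn T r := by
      refine (hUw a).resolve_left (not_mem_cn haw fun h => ?_)
      rcases hcnw a (mem_cn_of_adj h) with rfl | rfl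
      · exact haw rfl
      · exact hva.ne rfl
    rcases hcna r (cn_comm.1 har) with h1 | h1
    · rcases hcnc r (cn_comm.1 hcr) with h2 | h2 | h2
      · exact hacne (h1.symm.trans h2)
      · exact hva.ne' (h1.symm.trans h2)
      · exact hvu ((h1.symm.trans h2) ▸ hva)
    · rw [h1] at hur
      rcases mem_cn.1 hur with h | h
      · exact hne h.symm
      · exact hvu h
  -- classification
  have huniv : ∀ x : V, x = w ∨ x = v ∨ x = c ∨ x = u := by
    intro x
    rcases hU x with h | h
    · rcases mem_cn.1 h with rfl | hvx
      · exact Or.inr (Or.inl rfl)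
      · rcases hAsub x hvx with rfl | rfl
        · exact Or.inr (Or.inr (Or.inl rfl))
        · exact Or.inl rfl
    · rcases mem_cn.1 h with rfl | hux
      · exact Or.inr (Or.inr (Or.inr rfl))
      · exact Or.inr (Or.inr (Or.inl (hBemp x hux)))
  exact ⟨w, v, c, u, ⟨hvw.symm, hvc, huc.symm⟩,
    ⟨fun h => hcw h.symm, fun h => huw h.symm, hvu⟩, ⟨hwc, hwu, hne⟩, huniv⟩

lemma dist2 (hT : T.IsTree) (hB : ∀ a : V, ∃ b : V, ∀ x : V, x ∈ cn T a ∨ x ∈ cn T b)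
    (hno : ∀ c : V, cn T c ≠ Finset.univ) {v u c : V} (hvu : ¬T.Adj v u) (hne : v ≠ u)
    (hU : ∀ x : V, x ∈ cn T v ∨ x ∈ cn T u) (hvc : T.Adj v c) (huc : T.Adj u c) :
    ∃ a b c d : V, P4Data T a b c d := by
  have hac := hT.IsAcyclic
  have hU' : ∀ x : V, x ∈ cn T u ∨ x ∈ cn T v := fun x => (hU x).symm
  have hcommon : ∀ x, T.Adj v x → T.Adj u x → x = c := by
    intro x hvx hux
    by_contra hxc
    exact L22 hac hvx hux.symm hvc huc.symm hxc hne
  obtain ⟨w, hw⟩ : ∃ w, w ∉ cn T c := by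
    by_contra hc
    push_neg at hc
    exact hno c (Finset.eq_univ_iff_forall.2 hc)
  have hwc : w ≠ c := fun h => hw (h ▸ self_mem_cn)
  have hncw : ¬T.Adj c w := fun h => hw (mem_cn_of_adj h)
  rcases hU w with h | h
  · have hwv : w ≠ v := fun h2 => hw (h2 ▸ mem_cn_of_adj hvc.symm)
    have hvw : T.Adj v w := adj_of_mem_cn h hwv
    have hnuw : ¬T.Adj u w := fun h2 => hwc (hcommon w hvw h2)
    exact dist2Side hT hB hvu hne hU hvc huc hvw hncw hnuw
  · have hwu : w ≠ u := fun h2 => hw (h2 ▸ mem_cn_of_adj huc.symm)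
    have huw : T.Adj u w := adj_of_mem_cn h hwu
    have hnvw : ¬T.Adj v w := fun h2 => hwc (hcommon w h2 huw)
    exact dist2Side hT hB (fun h2 => hvu h2.symm) (Ne.symm hne) hU' huc hvc huw hncw hnvw

lemma dist3Aempty (hT : T.IsTree) (hB : ∀ a : V, ∃ b : V, ∀ x : V, x ∈ cn T a ∨ x ∈ cn T b)
    {v u p q : V} (hvu : ¬T.Adj v u) (hne : v ≠ u)
    (hU : ∀ x : V, x ∈ cn T v ∨ x ∈ cn T u) (hvp : T.Adj v p) (hpq : T.Adj p q)
    (hqu : T.Adj q u) (hup : ¬T.Adj u p) (hvq : ¬T.Adj v q) :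
    ∀ x, T.Adj v x → x = p := by
  have hac := hT.IsAcyclic
  have hqv : q ≠ v := fun h => hvu (h ▸ hqu)
  have hpu : p ≠ u := fun h => hvu (h ▸ hvp)
  have hcnp : ∀ x ∈ cn T p, x = p ∨ x = v ∨ x = q := by
    intro x hx
    by_contra hcon
    push_neg at hcon
    obtain ⟨hxp, hxv, hxq⟩ := hcon
    have hpx : T.Adj p x := adj_of_mem_cn hx hxp
    have hxu : x ≠ u := fun h => hup (by rw [h] at hpx; exact hpx.symm)
    rcases hU x with h | h
    · exact L12 hac hvp hpx (adj_of_mem_cn h hxv)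
    · exact L22 hac hpq hqu hpx (adj_of_mem_cn h hxu).symm (Ne.symm hxq) hpu
  intro a hva
  by_contra hap
  have hav : a ≠ v := hva.ne'
  have haq : a ≠ q := fun h => hvq (h ▸ hva)
  have hau : a ≠ u := fun h => hvu (h ▸ hva)
  have hnpa : ¬T.Adj p a := by
    intro h
    rcases hcnp a (mem_cn_of_adj h) with h2 | h2 | h2
    · exact hap h2
    · exact hav h2
    · exact haq h2
  have hnua : ¬T.Adj u a :=
    fun h => L23 hac hva h.symm hvp hpq hqu hne (Ne.symm hqv) hpu
  have hnqa : ¬T.Adj q a :=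
    fun h => L22 hac hva h.symm hvp hpq hap (Ne.symm hqv)
  have hcna : ∀ x ∈ cn T a, x = a ∨ x = v := by
    intro x hx
    by_contra hcon
    push_neg at hcon
    obtain ⟨hxa, hxv⟩ := hcon
    have hax : T.Adj a x := adj_of_mem_cn hx hxa
    have hxp : x ≠ p := fun h => hnpa (by rw [h] at hax; exact hax.symm)
    have hxu : x ≠ u := fun h => hnua (by rw [h] at hax; exact hax.symm)
    have hxq : x ≠ q := fun h => hnqa (by rw [h] at hax; exact hax.symm)
    rcases hU x with h | h
    · exact L12 hac hva hax (adj_of_mem_cn h hxv)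
    · exact L33 hac hva hax (adj_of_mem_cn h hxu).symm hvp hpq hqu hap (Ne.symm hxv)
        hau hne (Ne.symm hqv) hpu
  obtain ⟨t, hUp⟩ := hB p
  have hut : u ∈ cn T t :=
    (hUp u).resolve_left (not_mem_cn (Ne.symm hpu) (fun h => hup h.symm))
  have hat : a ∈ cn T t :=
    (hUp a).resolve_left (not_mem_cn hap hnpa)
  rcases hcna t (cn_comm.1 hat) with h1 | h1
  · rw [h1] at hut
    rcases mem_cn.1 hut with h | h
    · exact hau h.symm
    · exact hnua h.symm
  · rw [h1] at hut
    rcases mem_cn.1 hut with h | h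
    · exact hne h.symm
    · exact hvu h

lemma dist3 (hT : T.IsTree) (hB : ∀ a : V, ∃ b : V, ∀ x : V, x ∈ cn T a ∨ x ∈ cn T b)
    {v u p q : V} (hvu : ¬T.Adj v u) (hne : v ≠ u)
    (hU : ∀ x : V, x ∈ cn T v ∨ x ∈ cn T u) (hvp : T.Adj v p) (hpq : T.Adj p q)
    (hqu : T.Adj q u) (hup : ¬T.Adj u p) (hvq : ¬T.Adj v q) :
    ∃ a b c d : V, P4Data T a b c d := by
  have hU' : ∀ x : V, x ∈ cn T u ∨ x ∈ cn T v := fun x => (hU x).symm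
  have hA := dist3Aempty hT hB hvu hne hU hvp hpq hqu hup hvq
  have hBq := dist3Aempty hT hB (fun h => hvu h.symm) (Ne.symm hne) hU' hqu.symm hpq.symm
    hvp.symm hvq hup
  have hqv : q ≠ v := fun h => hvu (h ▸ hqu)
  have hpu : p ≠ u := fun h => hvu (h ▸ hvp)
  have huniv : ∀ x : V, x = v ∨ x = p ∨ x = q ∨ x = u := by
    intro x
    rcases hU x with h | h
    · rcases mem_cn.1 h with rfl | hvx
      · exact Or.inl rfl
      · exact Or.inr (Or.inl (hA x hvx))
    · rcases mem_cn.1 h with rfl | hux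
      · exact Or.inr (Or.inr (Or.inr rfl))
      · exact Or.inr (Or.inr (Or.inl (hBq x hux)))
  exact ⟨v, p, q, u, ⟨hvp, hpq, hqu⟩, ⟨hvq, hvu, fun h => hup h.symm⟩,
    ⟨Ne.symm hqv, hne, hpu⟩, huniv⟩

lemma caseNonAdj (hT : T.IsTree) (hB : ∀ a : V, ∃ b : V, ∀ x : V, x ∈ cn T a ∨ x ∈ cn T b)
    (hno : ∀ c : V, cn T c ≠ Finset.univ) {v u : V} (hvu : ¬T.Adj v u) (hne : v ≠ u)
    (hU : ∀ x : V, x ∈ cn T v ∨ x ∈ cn T u) :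
    ∃ a b c d : V, P4Data T a b c d := by
  have hucv : u ∉ cn T v := not_mem_cn (Ne.symm hne) hvu
  obtain ⟨p, q, hpq, hp, hq⟩ := cross hT.isConnected hucv
  have hqv : q ≠ v := fun h => hq (h ▸ self_mem_cn)
  have hnvq : ¬T.Adj v q := fun h => hq (mem_cn_of_adj h)
  have hqu : q ∈ cn T u := (hU q).resolve_left hq
  by_cases hpv : p = v
  · -- q is a common neighbor
    subst hpv
    have hqune : q ≠ u := fun h => hvu (h ▸ hpq)
    exact dist2 hT hB hno hvu hne hU hpq (adj_of_mem_cn hqu hqune)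
  · have hvp : T.Adj v p := adj_of_mem_cn hp hpv
    by_cases hqu' : q = u
    · subst hqu'
      exact dist2 hT hB hno hvu hne hU hvp hpq.symm
    · have huq : T.Adj u q := adj_of_mem_cn hqu hqu'
      by_cases hup : T.Adj u p
      · exact dist2 hT hB hno hvu hne hU hvp hup
      · exact dist3 hT hB hvu hne hU hvp hpq huq.symm hup hnvq

lemma mainStruct (hT : T.IsTree) (hA : ∃ v w : V, w ∉ cn T v)
    (hB : ∀ a : V, ∃ b : V, ∀ x : V, x ∈ cn T a ∨ x ∈ cn T b) :
    (∃ c : V, cn T c = Finset.univ) ∨ ∃ a b c d : V, P4Data T a b c d := by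
  by_cases hstar : ∃ c : V, cn T c = Finset.univ
  · exact Or.inl hstar
  · push_neg at hstar
    right
    obtain ⟨v₁, w₁, _⟩ := hA
    obtain ⟨u, hU⟩ := hB v₁
    have hne : v₁ ≠ u := by
      rintro rfl
      exact hstar v₁ (Finset.eq_univ_iff_forall.2 fun x => by
        rcases hU x with h | h <;> exact h)
    by_cases hadj : T.Adj v₁ u
    · exact caseAdj hT hB hstar hadj hU
    · exact caseNonAdj hT hB hstar hadj hne hU

lemma starIso (hT : T.IsTree) {c : V} (hc : cn T c = Finset.univ)
    (hcard : 3 ≤ Fintype.card V) :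
    ∃ n : ℕ, 2 ≤ n ∧ Nonempty (T ≃g completeBipartiteGraph (Fin 1) (Fin n)) := by
  classical
  have hac := hT.IsAcyclic
  have hadj : ∀ x : V, x ≠ c → T.Adj c x := fun x hx =>
    (mem_cn.1 (hc ▸ Finset.mem_univ x)).resolve_left hx
  have hnoleaf : ∀ x y : V, x ≠ c → y ≠ c → ¬T.Adj x y := fun x y hx hy h =>
    L12 hac (hadj x hx) h (hadj y hy)
  have hcardsub : Fintype.card {x : V // x ≠ c} = Fintype.card V - 1 := by
    rw [Fintype.card_subtype_compl, Fintype.card_subtype_eq]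
  let e2 : {x : V // x ≠ c} ≃ Fin (Fintype.card V - 1) := Fintype.equivFinOfCardEq hcardsub
  refine ⟨Fintype.card V - 1, by omega, ⟨?_⟩⟩
  refine ⟨⟨fun x => if h : x = c then Sum.inl 0 else Sum.inr (e2 ⟨x, h⟩),
    Sum.elim (fun _ => c) (fun i => (e2.symm i).1), ?_, ?_⟩, ?_⟩
  · intro x
    by_cases h : x = c
    · simp [h]
    · simp [h]
  · rintro (i | i)
    · simp [Subsingleton.elim (0 : Fin 1) i]
    · have h := (e2.symm i).2
      simp [h]
  · intro x y
    by_cases hx : x = c <;> by_cases hy : y = c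
    · subst hx; subst hy; simp
    · subst hx
      simp [hy, hadj y hy]
    · subst hy
      simp [hx, (hadj x hx).symm]
    · simp [hx, hy, hnoleaf x y hx hy]

lemma p4Iso {a b c d : V} (hd : P4Data T a b c d) :
    Nonempty (T ≃g SimpleGraph.pathGraph 4) := by
  classical
  obtain ⟨⟨hab, hbc, hcd⟩, ⟨hnac, hnad, hnbd⟩, ⟨hac', had', hbd'⟩, huniv⟩ := hd
  have hab' : a ≠ b := hab.ne
  have hbc' : b ≠ c := hbc.ne
  have hcd' : c ≠ d := hcd.ne
  have hba : b ≠ a := hab'.symm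
  have hca : c ≠ a := hac'.symm
  have hda : d ≠ a := had'.symm
  have hcb : c ≠ b := hbc'.symm
  have hdb : d ≠ b := hbd'.symm
  have hdc : d ≠ c := hcd'.symm
  have hnca : ¬T.Adj c a := fun h => hnac h.symm
  have hnda : ¬T.Adj d a := fun h => hnad h.symm
  have hndb : ¬T.Adj d b := fun h => hnbd h.symm
  have hba2 := hab.symm
  have hcb2 := hbc.symm
  have hdc2 := hcd.symm
  let f : V → Fin 4 := fun x => if x = a then 0 else if x = b then 1 else if x = c then 2 else 3
  refine ⟨⟨⟨f, ![a, b, c, d], ?_, ?_⟩, ?_⟩⟩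
  · intro x
    rcases huniv x with rfl | rfl | rfl | rfl <;>
      simp [f, hba, hca, hda, hcb, hdb, hdc]
  · intro i
    fin_cases i <;> simp [f, hba, hca, hda, hcb, hdb, hdc]
  · intro x y
    rcases huniv x with rfl | rfl | rfl | rfl <;> rcases huniv y with rfl | rfl | rfl | rfl <;>
      simp [f, hba, hca, hda, hcb, hdb, hdc, SimpleGraph.pathGraph_adj,
        hab, hbc, hcd, hba2, hcb2, hdc2, hnac, hnad, hnbd, hnca, hnda, hndb] <;>
      decide

end Stmt10Aux

/-- a tree with γ_g'(T) = 2 is a star K_{1,n} (n ≥ 2) or the path P_4. -/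
theorem stmt10 {V : Type*} [Fintype V] [DecidableEq V] (T : SimpleGraph V)
    (hT : T.IsTree) (h2 : DomGame.gammaG' T = 2) :
    (∃ n : ℕ, 2 ≤ n ∧ Nonempty (T ≃g completeBipartiteGraph (Fin 1) (Fin n))) ∨
      Nonempty (T ≃g SimpleGraph.pathGraph 4) := by
  obtain ⟨hA, hB⟩ := Stmt10Aux.extract hT h2
  rcases Stmt10Aux.mainStruct hT hA hB with ⟨c, hc⟩ | ⟨a, b, c, d, hd⟩
  · left
    obtain ⟨v, w, hw⟩ := hA
    have hvw : v ≠ w := fun h => hw (h ▸ Stmt10Aux.self_mem_cn)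
    have hcv : c ≠ v := fun h => hw (by rw [← h, hc]; exact Finset.mem_univ w)
    have hcw : c ≠ w := fun h =>
      hw (Stmt10Aux.cn_comm.1 (by rw [← h, hc]; exact Finset.mem_univ v))
    have h3 : 3 ≤ Fintype.card V := by
      have hsub : ({c, v, w} : Finset V).card ≤ Fintype.card V := Finset.card_le_univ _
      rw [Finset.card_insert_of_notMem (by simp [hcv, hcw]),
        Finset.card_insert_of_notMem (by simp [hvw]), Finset.card_singleton] at hsub
      omega
    exact Stmt10Aux.starIso hT hc h3
  · right
    exact Stmt10Aux.p4Iso hd
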